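/- Let G be a graph and let W and Z be disjoint vertex subsets of G such that the induced subgraph G[W] is 2-connected, G[Z] is connected, and Z has at least 3 neighbors in W (|N_W(Z)| ≥ 3). Then the induced subgraph G[W ∪ Z] contains K_4 as a minor. -/

import Mathlib

open SimpleGraph Set

namespace K4Aux

variable {V : Type} {G : SimpleGraph V}

lemma walks_of_induce_connected {s : Set V} (h : (G.induce s).Connected)
    {u v : V} (hu : u ∈ s) (hv : v ∈ s) :
    ∃ p : G.Walk u v, ∀ x ∈ p.support, x ∈ s := by
  rw [SimpleGraph.connected_induce_iff,
    SimpleGraph.Subgraph.connected_iff_forall_exists_walk_subgraph] at h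
  obtain ⟨p, hp⟩ := h.2 (by simpa using hu) (by simpa using hv)
  refine ⟨p, fun x hx => ?_⟩
  have : x ∈ p.toSubgraph.verts := by rw [p.verts_toSubgraph]; exact hx
  simpa using hp.1 this

lemma induce_connected_of_walks {s : Set V} (hne : s.Nonempty)
    (h : ∀ u ∈ s, ∀ v ∈ s, ∃ p : G.Walk u v, ∀ x ∈ p.support, x ∈ s) :
    (G.induce s).Connected := by
  rw [SimpleGraph.connected_induce_iff,
    SimpleGraph.Subgraph.connected_iff_forall_exists_walk_subgraph]
  refine ⟨by simpa using hne, fun {u v} hu hv => ?_⟩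
  obtain ⟨p, hp⟩ := h u (by simpa using hu) v (by simpa using hv)
  refine ⟨p, le_trans p.toSubgraph_le_induce_support ?_⟩
  exact SimpleGraph.Subgraph.induce_mono le_rfl hp

/-- transfer connectivity to a double induce -/
lemma induce_preimage_connected (G : SimpleGraph V) (s t : Set V) (hts : t ⊆ s)
    (h : (G.induce t).Connected) :
    ((G.induce s).induce (Subtype.val ⁻¹' t)).Connected := by
  have himg : (Subtype.val '' (Subtype.val ⁻¹' t : Set ↑s)) = t := by
    ext v
    constructor
    · rintro ⟨⟨x, hxs⟩, hx, rfl⟩; exact hx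
    · intro hv; exact ⟨⟨v, hts hv⟩, hv, rfl⟩
  have e : ((G.induce s).induce (Subtype.val ⁻¹' t : Set ↑s)) ≃g
      (G.induce (Subtype.val '' (Subtype.val ⁻¹' t : Set ↑s))) := by
    refine ⟨Equiv.Set.image Subtype.val _ Subtype.val_injective, ?_⟩
    intro a b
    simp [Equiv.Set.image, Equiv.Set.imageOfInjOn, SimpleGraph.comap_adj]
  rw [e.connected_iff, himg]
  exact h

section DecEq

variable [DecidableEq V]

lemma takeUntil_cons' {u w v b : V} (h : G.Adj u w) (q : G.Walk w v)
    (hb : b ∈ (SimpleGraph.Walk.cons h q).support) (hbu : u ≠ b) (hb' : b ∈ q.support) :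
    (SimpleGraph.Walk.cons h q).takeUntil b hb = SimpleGraph.Walk.cons h (q.takeUntil b hb') := by
  simp [SimpleGraph.Walk.takeUntil, dif_neg hbu]

lemma order_lemma {u v : V} (p : G.Walk u v) :
    ∀ (a b : V) (ha : a ∈ p.support) (hb : b ∈ p.support),
      a ∈ (p.takeUntil b hb).support ∨ b ∈ (p.takeUntil a ha).support := by
  induction p with
  | nil =>
    intro a b ha hb
    have ha' := SimpleGraph.Walk.mem_support_nil_iff.mp ha
    have hb' := SimpleGraph.Walk.mem_support_nil_iff.mp hb
    subst ha'; subst hb'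
    left; exact SimpleGraph.Walk.end_mem_support _
  | @cons x y z h q ih =>
    intro a b ha hb
    by_cases hbu : x = b
    · right; subst hbu; exact SimpleGraph.Walk.start_mem_support _
    · by_cases hau : x = a
      · left; subst hau; exact SimpleGraph.Walk.start_mem_support _
      · have ha' : a ∈ q.support := by
          rw [SimpleGraph.Walk.support_cons, List.mem_cons] at ha
          rcases ha with h1 | h1
          · exact absurd h1.symm hau
          · exact h1
        have hb' : b ∈ q.support := by
          rw [SimpleGraph.Walk.support_cons, List.mem_cons] at hb
          rcases hb with h1 | h1
          · exact absurd h1.symm hbu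
          · exact h1
        rcases ih a b ha' hb' with h1 | h1
        · left
          rw [takeUntil_cons' h q _ hbu hb', SimpleGraph.Walk.support_cons]
          exact List.mem_cons_of_mem _ h1
        · right
          rw [takeUntil_cons' h q _ hau ha', SimpleGraph.Walk.support_cons]
          exact List.mem_cons_of_mem _ h1

end DecEq

lemma path_self_support {u : V} (p : G.Walk u u) (hp : p.IsPath) : p.support = [u] := by
  cases p with
  | nil => rfl
  | cons h q =>
    rw [SimpleGraph.Walk.cons_isPath_iff] at hp
    exact absurd q.end_mem_support hp.2

lemma closure_walk {C S : Set V} (hcl : ∀ u ∈ C, ∀ v, G.Adj u v → v ∈ S → v ∈ C) :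
    ∀ {a b : V} (p : G.Walk a b), (∀ x ∈ p.support, x ∈ S) → a ∈ C → b ∈ C := by
  intro a b p
  induction p with
  | nil => exact fun _ ha => ha
  | @cons x y z h q ih =>
    intro hsup hx
    refine ih (fun t ht => hsup t ?_) (hcl x hx y h (hsup y ?_))
    · rw [SimpleGraph.Walk.support_cons]; exact List.mem_cons_of_mem _ ht
    · rw [SimpleGraph.Walk.support_cons]
      exact List.mem_cons_of_mem _ q.start_mem_support

end K4Aux

/-- `G` contains `K₄` as a minor: there are four pairwise disjoint nonempty connected
branch sets with an edge of `G` between every two of them. -/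
def HasK4Minor {V : Type} (G : SimpleGraph V) : Prop :=
  ∃ B : Fin 4 → Set V,
    (∀ i, (G.induce (B i)).Connected) ∧
    (∀ i j, i ≠ j → Disjoint (B i) (B j)) ∧
    (∀ i j, i ≠ j → ∃ a ∈ B i, ∃ b ∈ B j, G.Adj a b)

/-- The induced subgraph `G[B]` is 2-connected: connected, at least 3 vertices,
and no cut vertex. -/
def TwoConnOn {V : Type} (G : SimpleGraph V) (B : Set V) : Prop :=
  (G.induce B).Connected ∧ 3 ≤ B.ncard ∧ ∀ b ∈ B, (G.induce (B \ {b})).Connected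

namespace K4Aux

variable {V : Type} {G : SimpleGraph V}

/-- Final assembly: given the path, the component `C` and two distinct attachment
points `x` (earlier) and `y` (later) of `C` on the path, build the `K₄` minor. -/
lemma assemble [DecidableEq V] {W Z : Set V} (hdisj : Disjoint W Z)
    (hZ : (G.induce Z).Connected)
    {w1 w2 w3 z1 z2 z3 : V}
    (hz1 : z1 ∈ Z) (hz2 : z2 ∈ Z) (hz3 : z3 ∈ Z)
    (ha1 : G.Adj w1 z1) (ha2 : G.Adj w2 z2) (ha3 : G.Adj w3 z3)
    (P : G.Walk w1 w2) (hPpath : P.IsPath) (hPW : ∀ x ∈ P.support, x ∈ W)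
    (C : Set V) (hCconn : (G.induce C).Connected) (hw3C : w3 ∈ C)
    (hCW : C ⊆ W) (hCP : ∀ v ∈ C, v ∉ P.support)
    {x y : V} (hy : y ∈ P.support) (hx : x ∈ (P.takeUntil y hy).support) (hxy : x ≠ y)
    {cx cy : V} (hcx : cx ∈ C) (hcy : cy ∈ C) (hax : G.Adj cx x) (hay : G.Adj cy y) :
    HasK4Minor (G.induce (W ∪ Z)) := by
  have hyw1 : w1 ≠ y := by
    rintro rfl
    have hss := path_self_support (P.takeUntil w1 hy) (hPpath.takeUntil hy)
    rw [hss, List.mem_singleton] at hx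
    exact hxy hx
  have hQpath : (P.takeUntil y hy).IsPath := hPpath.takeUntil hy
  have hQrevpath : (P.takeUntil y hy).reverse.IsPath := hQpath.reverse
  obtain ⟨y', hady, Q', hQ'⟩ :=
    SimpleGraph.Walk.exists_eq_cons_of_ne hyw1.symm (P.takeUntil y hy).reverse
  have hyQ' : y ∉ Q'.support := by
    rw [hQ', SimpleGraph.Walk.cons_isPath_iff] at hQrevpath
    exact hQrevpath.2
  have hQ'sub : ∀ v ∈ Q'.support, v ∈ (P.takeUntil y hy).support := by
    intro v hv
    have hm : v ∈ (P.takeUntil y hy).reverse.support := by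
      rw [hQ', SimpleGraph.Walk.support_cons]; exact List.mem_cons_of_mem _ hv
    rwa [SimpleGraph.Walk.support_reverse, List.mem_reverse] at hm
  set T1 : Set V := {v | v ∈ Q'.support} with hT1def
  set T2 : Set V := {v | v ∈ (P.dropUntil y hy).support} with hT2def
  have hw1T1 : w1 ∈ T1 := Q'.end_mem_support
  have hxT1 : x ∈ T1 := by
    have hm : x ∈ (P.takeUntil y hy).reverse.support := by
      rw [SimpleGraph.Walk.support_reverse, List.mem_reverse]; exact hx
    rw [hQ', SimpleGraph.Walk.support_cons, List.mem_cons] at hm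
    rcases hm with h | h
    · exact absurd h hxy
    · exact h
  have hy'T1 : y' ∈ T1 := Q'.start_mem_support
  have hyT2 : y ∈ T2 := (P.dropUntil y hy).start_mem_support
  have hw2T2 : w2 ∈ T2 := (P.dropUntil y hy).end_mem_support
  have hT1P : ∀ v ∈ T1, v ∈ P.support :=
    fun v hv => P.support_takeUntil_subset hy (hQ'sub v hv)
  have hT2P : ∀ v ∈ T2, v ∈ P.support :=
    fun v hv => P.support_dropUntil_subset hy hv
  have hT1W : T1 ⊆ W := fun v hv => hPW v (hT1P v hv)
  have hT2W : T2 ⊆ W := fun v hv => hPW v (hT2P v hv)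
  have hd12 : Disjoint T1 T2 := by
    rw [Set.disjoint_left]
    intro v hv1 hv2
    have hnd := hPpath.support_nodup
    rw [← P.take_spec hy, SimpleGraph.Walk.support_append] at hnd
    have hdl := List.disjoint_of_nodup_append hnd
    have hvQ : v ∈ (P.takeUntil y hy).support := hQ'sub v hv1
    have hvy : v ≠ y := fun e => hyQ' (e ▸ hv1)
    have hvt : v ∈ (P.dropUntil y hy).support.tail := by
      have hm : v ∈ (P.dropUntil y hy).support := hv2
      rw [SimpleGraph.Walk.support_eq_cons] at hm
      rcases List.mem_cons.mp hm with h | h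
      · exact absurd h hvy
      · exact h
    exact hdl hvQ hvt
  have hd13 : Disjoint T1 C := by
    rw [Set.disjoint_left]; intro v hv1 hv2; exact hCP v hv2 (hT1P v hv1)
  have hd23 : Disjoint T2 C := by
    rw [Set.disjoint_left]; intro v hv1 hv2; exact hCP v hv2 (hT2P v hv1)
  have hd14 : Disjoint T1 Z := hdisj.mono_left hT1W
  have hd24 : Disjoint T2 Z := hdisj.mono_left hT2W
  have hd34 : Disjoint C Z := hdisj.mono_left hCW
  have hT1sub : T1 ⊆ W ∪ Z := hT1W.trans Set.subset_union_left
  have hT2sub : T2 ⊆ W ∪ Z := hT2W.trans Set.subset_union_left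
  have hCsub' : C ⊆ W ∪ Z := hCW.trans Set.subset_union_left
  have hZsub : Z ⊆ W ∪ Z := Set.subset_union_right
  have hT1conn : (G.induce T1).Connected := Q'.connected_induce_support
  have hT2conn : (G.induce T2).Connected := (P.dropUntil y hy).connected_induce_support
  refine ⟨fun i => Subtype.val ⁻¹' (![T1, T2, C, Z] i), ?_, ?_, ?_⟩
  · intro i
    fin_cases i
    · exact induce_preimage_connected G _ _ hT1sub hT1conn
    · exact induce_preimage_connected G _ _ hT2sub hT2conn
    · exact induce_preimage_connected G _ _ hCsub' hCconn
    · exact induce_preimage_connected G _ _ hZsub hZ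
  · intro i j hij
    fin_cases i <;> fin_cases j <;>
      first
        | exact absurd rfl hij
        | exact Disjoint.preimage _ hd12
        | exact Disjoint.preimage _ hd13
        | exact Disjoint.preimage _ hd14
        | exact Disjoint.preimage _ hd23
        | exact Disjoint.preimage _ hd24
        | exact Disjoint.preimage _ hd34
        | exact Disjoint.preimage _ hd12.symm
        | exact Disjoint.preimage _ hd13.symm
        | exact Disjoint.preimage _ hd14.symm
        | exact Disjoint.preimage _ hd23.symm
        | exact Disjoint.preimage _ hd24.symm
        | exact Disjoint.preimage _ hd34.symm
  · intro i j hij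
    fin_cases i <;> fin_cases j <;>
      first
        | exact absurd rfl hij
        | exact ⟨⟨y', hT1sub hy'T1⟩, hy'T1, ⟨y, hT2sub hyT2⟩, hyT2, hady.symm⟩
        | exact ⟨⟨y, hT2sub hyT2⟩, hyT2, ⟨y', hT1sub hy'T1⟩, hy'T1, hady⟩
        | exact ⟨⟨x, hT1sub hxT1⟩, hxT1, ⟨cx, hCsub' hcx⟩, hcx, hax.symm⟩
        | exact ⟨⟨cx, hCsub' hcx⟩, hcx, ⟨x, hT1sub hxT1⟩, hxT1, hax⟩
        | exact ⟨⟨y, hT2sub hyT2⟩, hyT2, ⟨cy, hCsub' hcy⟩, hcy, hay.symm⟩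
        | exact ⟨⟨cy, hCsub' hcy⟩, hcy, ⟨y, hT2sub hyT2⟩, hyT2, hay⟩
        | exact ⟨⟨w1, hT1sub hw1T1⟩, hw1T1, ⟨z1, hZsub hz1⟩, hz1, ha1⟩
        | exact ⟨⟨z1, hZsub hz1⟩, hz1, ⟨w1, hT1sub hw1T1⟩, hw1T1, ha1.symm⟩
        | exact ⟨⟨w2, hT2sub hw2T2⟩, hw2T2, ⟨z2, hZsub hz2⟩, hz2, ha2⟩
        | exact ⟨⟨z2, hZsub hz2⟩, hz2, ⟨w2, hT2sub hw2T2⟩, hw2T2, ha2.symm⟩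
        | exact ⟨⟨w3, hCsub' hw3C⟩, hw3C, ⟨z3, hZsub hz3⟩, hz3, ha3⟩
        | exact ⟨⟨z3, hZsub hz3⟩, hz3, ⟨w3, hCsub' hw3C⟩, hw3C, ha3.symm⟩

end K4Aux

/-- If `W` and `Z` are disjoint, `G[W]` is 2-connected, `G[Z]` is connected, and `Z`
has at least three neighbors in `W`, then `G[W ∪ Z]` contains `K₄` as a minor. -/
theorem k4_minor_of_three_attachments {V : Type} (G : SimpleGraph V) (W Z : Set V)
    (hdisj : Disjoint W Z)
    (hW : TwoConnOn G W)
    (hZ : (G.induce Z).Connected)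
    (hN : 3 ≤ ({w ∈ W | ∃ z ∈ Z, G.Adj w z}).ncard) :
    HasK4Minor (G.induce (W ∪ Z)) := by
  classical
  open K4Aux in
  obtain ⟨hWconn, -, hWdel⟩ := hW
  obtain ⟨t, hts, htc⟩ := Set.exists_subset_card_eq hN
  obtain ⟨w1, w2, w3, h12, h13, h23, rfl⟩ := Set.ncard_eq_three.mp htc
  obtain ⟨hw1W, z1, hz1Z, ha1⟩ := hts (by simp : w1 ∈ ({w1, w2, w3} : Set V))
  obtain ⟨hw2W, z2, hz2Z, ha2⟩ := hts (by simp : w2 ∈ ({w1, w2, w3} : Set V))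
  obtain ⟨hw3W, z3, hz3Z, ha3⟩ := hts (by simp : w3 ∈ ({w1, w2, w3} : Set V))
  -- path from w1 to w2 avoiding w3
  have hw1' : w1 ∈ W \ {w3} := ⟨hw1W, by simp [h13]⟩
  have hw2' : w2 ∈ W \ {w3} := ⟨hw2W, by simp [h23]⟩
  obtain ⟨p0, hp0⟩ := K4Aux.walks_of_induce_connected (hWdel w3 hw3W) hw1' hw2'
  set P : G.Walk w1 w2 := p0.bypass with hPdef
  have hPpath : P.IsPath := p0.bypass_isPath
  have hPW3 : ∀ v ∈ P.support, v ∈ W \ {w3} :=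
    fun v hv => hp0 v (p0.support_bypass_subset hv)
  have hPW : ∀ v ∈ P.support, v ∈ W := fun v hv => (hPW3 v hv).1
  have hw3P : w3 ∉ P.support := fun h => (hPW3 _ h).2 rfl
  -- the component C of w3 in W minus P
  set C : Set V := {v | ∃ q : G.Walk w3 v, ∀ x ∈ q.support, x ∈ W ∧ x ∉ P.support}
    with hCdef
  have hw3C : w3 ∈ C := ⟨SimpleGraph.Walk.nil, by
    intro x hx
    rw [SimpleGraph.Walk.support_nil, List.mem_singleton] at hx
    subst hx; exact ⟨hw3W, hw3P⟩⟩
  have hCsub : ∀ v ∈ C, v ∈ W ∧ v ∉ P.support := by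
    rintro v ⟨q, hq⟩; exact hq v q.end_mem_support
  have hCpref : ∀ (v : V) (q : G.Walk w3 v), (∀ x ∈ q.support, x ∈ W ∧ x ∉ P.support) →
      ∀ x ∈ q.support, x ∈ C := fun v q hq x hx =>
    ⟨q.takeUntil x hx, fun y hy => hq y (q.support_takeUntil_subset hx hy)⟩
  have hCext : ∀ u ∈ C, ∀ v, G.Adj u v → v ∈ W → v ∉ P.support → v ∈ C := by
    rintro u ⟨q, hq⟩ v hadj hvW hvP
    refine ⟨q.concat hadj, ?_⟩
    intro x hx
    rw [SimpleGraph.Walk.support_concat, List.mem_append,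
      List.mem_singleton] at hx
    rcases hx with hx | rfl
    · exact hq x hx
    · exact ⟨hvW, hvP⟩
  have hCW : C ⊆ W := fun v hv => (hCsub v hv).1
  have hCP : ∀ v ∈ C, v ∉ P.support := fun v hv => (hCsub v hv).2
  have hCconn : (G.induce C).Connected := by
    apply K4Aux.induce_connected_of_walks ⟨w3, hw3C⟩
    rintro a ⟨qa, hqa⟩ b ⟨qb, hqb⟩
    refine ⟨qa.reverse.append qb, ?_⟩
    intro v hv
    rw [SimpleGraph.Walk.mem_support_append_iff] at hv
    rcases hv with hv | hv
    · rw [SimpleGraph.Walk.support_reverse, List.mem_reverse] at hv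
      exact hCpref a qa hqa v hv
    · exact hCpref b qb hqb v hv
  -- first attachment point
  have hNset : ∃ n, n ∈ P.support ∧ ∃ c ∈ C, G.Adj c n := by
    by_contra hno
    push_neg at hno
    obtain ⟨q, hq⟩ := K4Aux.walks_of_induce_connected hWconn hw3W hw1W
    have hcl : ∀ u ∈ C, ∀ v, G.Adj u v → v ∈ W → v ∈ C := by
      intro u hu v hadj hvW
      by_cases hvP : v ∈ P.support
      · exact absurd hadj (hno v hvP u hu)
      · exact hCext u hu v hadj hvW hvP
    have hw1C : w1 ∈ C := K4Aux.closure_walk hcl q hq hw3C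
    exact hCP _ hw1C P.start_mem_support
  obtain ⟨n1, hn1P, c1, hc1C, hc1adj⟩ := hNset
  have hn1W : n1 ∈ W := hPW _ hn1P
  have hn1w3 : w3 ≠ n1 := fun e => hw3P (e ▸ hn1P)
  -- second attachment point
  have hsecond : ∃ n2, n2 ∈ P.support ∧ n2 ≠ n1 ∧ ∃ c ∈ C, G.Adj c n2 := by
    by_contra hno
    push_neg at hno
    set r := if n1 = w1 then w2 else w1 with hr
    have hrP : r ∈ P.support := by
      by_cases h : n1 = w1 <;>
        simp [hr, h, P.start_mem_support, P.end_mem_support]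
    have hrn1 : r ≠ n1 := by
      by_cases h : n1 = w1
      · simpa [hr, h] using h12.symm
      · simpa [hr, h] using (Ne.symm h)
    have hw3r : w3 ∈ W \ {n1} := ⟨hw3W, by simpa using hn1w3⟩
    have hrr : r ∈ W \ {n1} := ⟨hPW _ hrP, by simpa using hrn1⟩
    obtain ⟨q, hq⟩ := K4Aux.walks_of_induce_connected (hWdel n1 hn1W) hw3r hrr
    have hcl : ∀ u ∈ C, ∀ v, G.Adj u v → v ∈ W \ {n1} → v ∈ C := by
      intro u hu v hadj hv
      by_cases hvP : v ∈ P.support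
      · exact absurd hadj (hno v hvP (by simpa using hv.2) u hu)
      · exact hCext u hu v hadj hv.1 hvP
    have hrC : r ∈ C := K4Aux.closure_walk hcl q hq hw3C
    exact hCP _ hrC hrP
  obtain ⟨n2, hn2P, hn21, c2, hc2C, hc2adj⟩ := hsecond
  rcases K4Aux.order_lemma P n1 n2 hn1P hn2P with hord | hord
  · exact K4Aux.assemble hdisj hZ hz1Z hz2Z hz3Z ha1 ha2 ha3 P hPpath hPW C hCconn
      hw3C hCW hCP hn2P hord hn21.symm hc1C hc2C hc1adj hc2adj
  · exact K4Aux.assemble hdisj hZ hz1Z hz2Z hz3Z ha1 ha2 ha3 P hPpath hPW C hCconn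
      hw3C hCW hCP hn1P hord hn21 hc2C hc1C hc2adj hc1adj
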